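/- Let A be a smooth ℂ-algebra, V a ℂ-vector space (not necessarily finite-dimensional), ρ: A → End_ℂ(V) a ℂ-algebra homomorphism, and λ ∈ A. Regard End_ℂ(V) as an A-bimodule via ρ. Then there exists a ℂ-linear map φ: Der(A, A⊗A) → End_ℂ(V) which is a homomorphism of A-bimodules for the inner bimodule structure on Der(A, A⊗A) (i.e. φ(a·δ·b) = ρ(a)∘φ(δ)∘ρ(b) for all a, b ∈ A and δ ∈ Der(A, A⊗A)) and which satisfies φ(Δ_A) = ρ(λ), if and only if ρ(λ) lies in [ρ(A), End(V)]. -/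

import Mathlib

open TensorProduct

set_option synthInstance.maxHeartbeats 1000000

universe u

section OutDer

variable (A : Type u) [Ring A] [Algebra ℂ A]

/-- The space `Der(A, A⊗A)` of ℂ-linear derivations `A → A ⊗[ℂ] A` with respect to the
*outer* bimodule structure on `A ⊗ A` (`a·(x⊗y)·b = ax ⊗ yb`), i.e. ℂ-linear maps with
`δ(xy) = δ(x)·(1⊗y) + (x⊗1)·δ(y)`. -/
def OutDer : Submodule ℂ (A →ₗ[ℂ] A ⊗[ℂ] A) where
  carrier := {δ | ∀ x y : A,
    δ (x * y) = δ x * ((1 : A) ⊗ₜ[ℂ] y) + (x ⊗ₜ[ℂ] (1 : A)) * δ y}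
  add_mem' := by
    intro f g hf hg x y
    simp only [LinearMap.add_apply, hf x y, hg x y, add_mul, mul_add]
    abel
  zero_mem' := by
    intro x y
    simp
  smul_mem' := by
    intro c f hf x y
    simp only [LinearMap.smul_apply, hf x y, smul_add, smul_mul_assoc, mul_smul_comm]

variable {A}

/-- The inner bimodule action `δ ↦ a·δ·b` on `Der(A, A⊗A)` (coming from the inner
bimodule structure `a·(x⊗y)·b = xb ⊗ ay` on `A ⊗ A`). -/
noncomputable def innerLR (a : A) (δ : ↥(OutDer A)) (b : A) : ↥(OutDer A) :=
  ⟨(LinearMap.mulLeft ℂ ((1 : A) ⊗ₜ[ℂ] a)) ∘ₗ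
      (LinearMap.mulRight ℂ (b ⊗ₜ[ℂ] (1 : A))) ∘ₗ (δ : A →ₗ[ℂ] A ⊗[ℂ] A), by
    intro x y
    have hδ := δ.2 x y
    have h1 : ((1 : A) ⊗ₜ[ℂ] y : A ⊗[ℂ] A) * (b ⊗ₜ[ℂ] (1 : A)) =
        (b ⊗ₜ[ℂ] (1 : A) : A ⊗[ℂ] A) * ((1 : A) ⊗ₜ[ℂ] y) := by
      simp [Algebra.TensorProduct.tmul_mul_tmul]
    have h2 : ((1 : A) ⊗ₜ[ℂ] a : A ⊗[ℂ] A) * (x ⊗ₜ[ℂ] (1 : A)) =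
        (x ⊗ₜ[ℂ] (1 : A) : A ⊗[ℂ] A) * ((1 : A) ⊗ₜ[ℂ] a) := by
      simp [Algebra.TensorProduct.tmul_mul_tmul]
    simp only [LinearMap.comp_apply, LinearMap.mulLeft_apply, LinearMap.mulRight_apply, hδ]
    rw [add_mul, mul_add]
    congr 1
    · rw [mul_assoc ((δ : A →ₗ[ℂ] A ⊗[ℂ] A) x), h1, ← mul_assoc ((δ : A →ₗ[ℂ] A ⊗[ℂ] A) x),
        ← mul_assoc, ← mul_assoc]
    · rw [mul_assoc (x ⊗ₜ[ℂ] (1 : A) : A ⊗[ℂ] A), ← mul_assoc ((1 : A) ⊗ₜ[ℂ] a : A ⊗[ℂ] A),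
        h2, mul_assoc]⟩

/-- The distinguished derivation `Δ_A : x ↦ x⊗1 − 1⊗x` in `Der(A, A⊗A)`. -/
noncomputable def deltaDer : ↥(OutDer A) :=
  ⟨(TensorProduct.mk ℂ A A).flip 1 - TensorProduct.mk ℂ A A 1, by
    intro x y
    simp only [LinearMap.sub_apply, LinearMap.flip_apply, TensorProduct.mk_apply]
    rw [sub_mul, mul_sub]
    simp only [Algebra.TensorProduct.tmul_mul_tmul, one_mul, mul_one]
    abel⟩

end OutDer




section Smooth

variable (B : Type u) [Ring B] [Algebra ℂ B]

/-- `B` as a module over its enveloping algebra `B^e = B ⊗[ℂ] Bᵐᵒᵖ`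
(the action `(b₁ ⊗ b₂ᵒᵖ) • x = b₁ * x * b₂`). -/
noncomputable instance envModule : Module (B ⊗[ℂ] Bᵐᵒᵖ) B :=
  TensorProduct.Algebra.module

/-- `Ω¹B`: the kernel of the multiplication map `B ⊗[ℂ] B → B`, viewed as a module over
the enveloping algebra `B^e = B ⊗[ℂ] Bᵐᵒᵖ` via the outer bimodule structure.  (Here
`B ⊗[ℂ] B` with the outer `B^e`-action is canonically identified with the left regular
module `B^e`, under which the multiplication map becomes `ξ ↦ ξ • 1`.) -/
noncomputable def Omega1 : Submodule (B ⊗[ℂ] Bᵐᵒᵖ) (B ⊗[ℂ] Bᵐᵒᵖ) :=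
  LinearMap.ker (LinearMap.toSpanSingleton (B ⊗[ℂ] Bᵐᵒᵖ) B 1)

/-- A ℂ-algebra `B` is *smooth* if it is finitely generated as a ℂ-algebra and
`Ω¹B` is a finitely generated projective module over `B^e = B ⊗[ℂ] Bᵐᵒᵖ`. -/
def IsSmoothAlgebra : Prop :=
  Algebra.FiniteType ℂ B ∧ Module.Finite (B ⊗[ℂ] Bᵐᵒᵖ) (Omega1 B) ∧
    Module.Projective (B ⊗[ℂ] Bᵐᵒᵖ) (Omega1 B)

end Smooth


set_option maxHeartbeats 1000000

noncomputable section AuxProof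

open MulOpposite

variable {A : Type u} [Ring A] [Algebra ℂ A]

/-- The linear equivalence `A ⊗ A ≃ A ⊗ Aᵐᵒᵖ` given by `x ⊗ y ↦ x ⊗ op y`. -/
def tauEq : (A ⊗[ℂ] A) ≃ₗ[ℂ] (A ⊗[ℂ] Aᵐᵒᵖ) :=
  TensorProduct.congr (LinearEquiv.refl ℂ A) (opLinearEquiv ℂ)

@[simp] lemma tauEq_tmul (x y : A) : tauEq (x ⊗ₜ[ℂ] y) = x ⊗ₜ[ℂ] (op y) := by
  simp [tauEq]

@[simp] lemma tauEq_symm_tmul (x : A) (y : Aᵐᵒᵖ) :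
    tauEq.symm (x ⊗ₜ[ℂ] y) = x ⊗ₜ[ℂ] y.unop := by
  simp [tauEq]

lemma tauEq_left_mul (x : A) (η : A ⊗[ℂ] A) :
    tauEq ((x ⊗ₜ[ℂ] (1:A)) * η) = (x ⊗ₜ[ℂ] (1:Aᵐᵒᵖ)) * tauEq η := by
  induction η using TensorProduct.induction_on with
  | zero => simp
  | tmul u v => simp [Algebra.TensorProduct.tmul_mul_tmul]
  | add a b ha hb => simp only [mul_add, map_add, ha, hb]

lemma tauEq_right_mul (y : A) (η : A ⊗[ℂ] A) :
    tauEq (η * ((1:A) ⊗ₜ[ℂ] y)) = ((1:A) ⊗ₜ[ℂ] (op y)) * tauEq η := by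
  induction η using TensorProduct.induction_on with
  | zero => simp
  | tmul u v => simp [Algebra.TensorProduct.tmul_mul_tmul]
  | add a b ha hb => simp only [add_mul, mul_add, map_add, ha, hb]

lemma tauEq_inner (a b : A) (η : A ⊗[ℂ] A) :
    tauEq (((1:A) ⊗ₜ[ℂ] a) * η * (b ⊗ₜ[ℂ] (1:A))) = tauEq η * (b ⊗ₜ[ℂ] (op a)) := by
  induction η using TensorProduct.induction_on with
  | zero => simp
  | tmul u v => simp [Algebra.TensorProduct.tmul_mul_tmul]
  | add a b ha hb => simp only [add_mul, mul_add, map_add, ha, hb]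

lemma tauEq_symm_left (x : A) (η : A ⊗[ℂ] Aᵐᵒᵖ) :
    tauEq.symm ((x ⊗ₜ[ℂ] (1:Aᵐᵒᵖ)) * η) = (x ⊗ₜ[ℂ] (1:A)) * tauEq.symm η := by
  apply tauEq.injective
  rw [LinearEquiv.apply_symm_apply, tauEq_left_mul, LinearEquiv.apply_symm_apply]

lemma tauEq_symm_right (y : A) (η : A ⊗[ℂ] Aᵐᵒᵖ) :
    tauEq.symm (((1:A) ⊗ₜ[ℂ] (op y)) * η) = tauEq.symm η * ((1:A) ⊗ₜ[ℂ] y) := by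
  apply tauEq.injective
  rw [LinearEquiv.apply_symm_apply, tauEq_right_mul, LinearEquiv.apply_symm_apply]

lemma env_smul_tmul (a : A) (b : Aᵐᵒᵖ) (x : A) :
    (a ⊗ₜ[ℂ] b) • x = a * (x * b.unop) := rfl

lemma mem_Omega1 {ξ : A ⊗[ℂ] Aᵐᵒᵖ} : ξ ∈ Omega1 A ↔ ξ • (1:A) = 0 := by
  simp [Omega1, LinearMap.mem_ker, LinearMap.toSpanSingleton_apply]

/-- The map `a ↦ 1 ⊗ op a - a ⊗ op 1` (negative of the universal derivation). -/
def eMap : A →ₗ[ℂ] A ⊗[ℂ] Aᵐᵒᵖ :=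
  (TensorProduct.mk ℂ A Aᵐᵒᵖ).flip (op (1:A))
    - (TensorProduct.mk ℂ A Aᵐᵒᵖ (1:A)) ∘ₗ (opLinearEquiv ℂ (M := A)).toLinearMap

@[simp] lemma eMap_apply (a : A) :
    eMap a = a ⊗ₜ[ℂ] (op (1:A)) - (1:A) ⊗ₜ[ℂ] (op a) := rfl

lemma eMap_mem (a : A) : eMap a ∈ Omega1 A := by
  rw [mem_Omega1, eMap_apply, sub_smul, env_smul_tmul, env_smul_tmul]
  simp

/-- `eMap` as an element of `Ω¹A`. -/
def eOm (a : A) : ↥(Omega1 A) := ⟨eMap a, eMap_mem a⟩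

@[simp] lemma eOm_coe (a : A) : (eOm a : A ⊗[ℂ] Aᵐᵒᵖ) = eMap a := rfl

section act

variable {V : Type u} [AddCommGroup V] [Module ℂ V] (ρ : A →ₐ[ℂ] Module.End ℂ V)

/-- The action of `A ⊗ Aᵐᵒᵖ` on `End V`: `(a ⊗ op b) • v = ρ(b) ∘ v ∘ ρ(a)`. -/
def act : (A ⊗[ℂ] Aᵐᵒᵖ) →ₗ[ℂ] Module.End ℂ V →ₗ[ℂ] Module.End ℂ V :=
  TensorProduct.lift <| LinearMap.mk₂ ℂ
    (fun a b => (LinearMap.mulRight ℂ (ρ a)) ∘ₗ (LinearMap.mulLeft ℂ (ρ b.unop)))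
    (by intro a a' b; ext v; simp [map_add, mul_add, add_mul])
    (by intro c a b; ext v; simp [map_smul, mul_smul_comm])
    (by intro a b b'; ext v; simp [map_add, mul_add, add_mul])
    (by intro c a b; ext v; simp [map_smul, smul_mul_assoc])

@[simp] lemma act_tmul (a : A) (b : Aᵐᵒᵖ) (v : Module.End ℂ V) :
    act ρ (a ⊗ₜ[ℂ] b) v = ρ b.unop * v * ρ a := by
  simp [act]

lemma act_mul (r s : A ⊗[ℂ] Aᵐᵒᵖ) (v : Module.End ℂ V) :
    act ρ (r * s) v = act ρ s (act ρ r v) := by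
  induction r using TensorProduct.induction_on with
  | zero => simp
  | add r₁ r₂ h1 h2 => simp [add_mul, map_add, h1, h2]
  | tmul a b =>
    induction s using TensorProduct.induction_on with
    | zero => simp
    | add s₁ s₂ h1 h2 => simp [mul_add, map_add, h1, h2]
    | tmul c d =>
      simp [Algebra.TensorProduct.tmul_mul_tmul, map_mul, mul_assoc]

lemma act_sub_mem (ξ : A ⊗[ℂ] Aᵐᵒᵖ) (v : Module.End ℂ V) :
    act ρ ξ v - v * ρ (ξ • (1:A)) ∈ Submodule.span ℂ
      {f : Module.End ℂ V | ∃ (a : A) (g : Module.End ℂ V), f = ρ a * g - g * ρ a} := by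
  induction ξ using TensorProduct.induction_on with
  | zero => simpa [zero_smul (A ⊗[ℂ] Aᵐᵒᵖ) (1:A)] using Submodule.zero_mem (Submodule.span ℂ
      {f : Module.End ℂ V | ∃ (a : A) (g : Module.End ℂ V), f = ρ a * g - g * ρ a})
  | tmul a b =>
    have key : act ρ (a ⊗ₜ[ℂ] b) v - v * ρ ((a ⊗ₜ[ℂ] b) • (1:A)) =
        ρ b.unop * (v * ρ a) - (v * ρ a) * ρ b.unop := by
      rw [act_tmul, env_smul_tmul, one_mul, map_mul]
      simp [mul_assoc]
    rw [key]
    exact Submodule.subset_span ⟨b.unop, v * ρ a, rfl⟩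
  | add ξ₁ ξ₂ h1 h2 =>
    have key : act ρ (ξ₁ + ξ₂) v - v * ρ ((ξ₁ + ξ₂) • (1:A)) =
        (act ρ ξ₁ v - v * ρ (ξ₁ • (1:A))) + (act ρ ξ₂ v - v * ρ (ξ₂ • (1:A))) := by
      rw [map_add, add_smul, map_add, mul_add, LinearMap.add_apply]
      abel
    rw [key]
    exact Submodule.add_mem _ h1 h2

lemma act_omega_mem (ω : ↥(Omega1 A)) (v : Module.End ℂ V) :
    act ρ (ω : A ⊗[ℂ] Aᵐᵒᵖ) v ∈ Submodule.span ℂ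
      {f : Module.End ℂ V | ∃ (a : A) (g : Module.End ℂ V), f = ρ a * g - g * ρ a} := by
  have h0 : (ω : A ⊗[ℂ] Aᵐᵒᵖ) • (1:A) = 0 := mem_Omega1.mp ω.2
  have := act_sub_mem ρ (ω : A ⊗[ℂ] Aᵐᵒᵖ) v
  rw [h0] at this
  simpa using this

end act

/-- Generalized inner action: `Jb r δ = τ⁻¹(τ∘δ * r)`. -/
def Jb (r : A ⊗[ℂ] Aᵐᵒᵖ) (δ : ↥(OutDer A)) : ↥(OutDer A) :=
  ⟨{ toFun := fun x => tauEq.symm (tauEq ((δ : A →ₗ[ℂ] A ⊗[ℂ] A) x) * r),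
     map_add' := fun x y => by
       show tauEq.symm (tauEq ((δ : A →ₗ[ℂ] A ⊗[ℂ] A) (x + y)) * r) =
         tauEq.symm (tauEq ((δ : A →ₗ[ℂ] A ⊗[ℂ] A) x) * r) +
           tauEq.symm (tauEq ((δ : A →ₗ[ℂ] A ⊗[ℂ] A) y) * r)
       rw [map_add, map_add, add_mul, map_add],
     map_smul' := fun c x => by
       show tauEq.symm (tauEq ((δ : A →ₗ[ℂ] A ⊗[ℂ] A) (c • x)) * r) =
         c • tauEq.symm (tauEq ((δ : A →ₗ[ℂ] A ⊗[ℂ] A) x) * r)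
       rw [map_smul, map_smul, smul_mul_assoc, map_smul] }, by
    intro x y
    have hδ := δ.2 x y
    show tauEq.symm (tauEq ((δ : A →ₗ[ℂ] A ⊗[ℂ] A) (x * y)) * r) = _
    rw [hδ, map_add, add_mul, map_add, tauEq_right_mul, tauEq_left_mul, mul_assoc, mul_assoc,
      tauEq_symm_right, tauEq_symm_left]
    rfl⟩

lemma Jb_coe_apply (r : A ⊗[ℂ] Aᵐᵒᵖ) (δ : ↥(OutDer A)) (x : A) :
    ((Jb r δ : ↥(OutDer A)) : A →ₗ[ℂ] A ⊗[ℂ] A) x =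
      tauEq.symm (tauEq ((δ : A →ₗ[ℂ] A ⊗[ℂ] A) x) * r) := rfl

lemma Jb_tmul (b : A) (a : Aᵐᵒᵖ) (δ : ↥(OutDer A)) :
    Jb (b ⊗ₜ[ℂ] a) δ = innerLR a.unop δ b := by
  apply Subtype.ext; apply LinearMap.ext; intro x
  rw [Jb_coe_apply]
  show _ = ((1:A) ⊗ₜ[ℂ] a.unop) * (((δ : A →ₗ[ℂ] A ⊗[ℂ] A) x) * (b ⊗ₜ[ℂ] (1:A)))
  conv_lhs => rw [← MulOpposite.op_unop a]
  rw [← tauEq_inner, LinearEquiv.symm_apply_apply, mul_assoc]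

lemma Jb_zero (δ : ↥(OutDer A)) : Jb 0 δ = 0 := by
  apply Subtype.ext; apply LinearMap.ext; intro x
  simp [Jb_coe_apply]

lemma Jb_add (r s : A ⊗[ℂ] Aᵐᵒᵖ) (δ : ↥(OutDer A)) :
    Jb (r + s) δ = Jb r δ + Jb s δ := by
  apply Subtype.ext; apply LinearMap.ext; intro x
  simp [Jb_coe_apply, mul_add, map_add]

section phi

variable {V : Type u} [AddCommGroup V] [Module ℂ V] (ρ : A →ₐ[ℂ] Module.End ℂ V)

lemma phi_Jb (φ : ↥(OutDer A) →ₗ[ℂ] Module.End ℂ V)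
    (hφ : ∀ (a b : A) (δ : ↥(OutDer A)), φ (innerLR a δ b) = ρ a * φ δ * ρ b)
    (r : A ⊗[ℂ] Aᵐᵒᵖ) (δ : ↥(OutDer A)) :
    φ (Jb r δ) = act ρ r (φ δ) := by
  induction r using TensorProduct.induction_on with
  | zero => simp [Jb_zero]
  | tmul b a => rw [Jb_tmul, hφ, act_tmul]
  | add r₁ r₂ h1 h2 => rw [Jb_add, map_add, map_add, LinearMap.add_apply, h1, h2]

end phi

/-- The derivation attached to an `A^e`-linear map `f : Ω¹A → A^e`. -/
def derOf (f : ↥(Omega1 A) →ₗ[A ⊗[ℂ] Aᵐᵒᵖ] (A ⊗[ℂ] Aᵐᵒᵖ)) : ↥(OutDer A) := by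
  refine ⟨{ toFun := fun a => tauEq.symm (f (eOm a)),
            map_add' := ?_, map_smul' := ?_ }, ?_⟩
  · intro a b
    show tauEq.symm (f (eOm (a + b))) = tauEq.symm (f (eOm a)) + tauEq.symm (f (eOm b))
    have h : eOm (a + b) = eOm a + eOm b := Subtype.ext (by simp [map_add])
    rw [h, map_add, map_add]
  · intro c a
    show tauEq.symm (f (eOm (c • a))) = c • tauEq.symm (f (eOm a))
    have h : eOm (c • a) = c • eOm a := Subtype.ext (by simp)
    rw [h, LinearMap.map_smul_of_tower, map_smul]
  · intro x y
    have key : eOm (x * y) = ((1:A) ⊗ₜ[ℂ] op y) • eOm x + (x ⊗ₜ[ℂ] (1:Aᵐᵒᵖ)) • eOm y := by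
      apply Subtype.ext
      simp only [Submodule.coe_add, SetLike.val_smul, smul_eq_mul, eOm_coe, eMap_apply,
        mul_sub, sub_mul, Algebra.TensorProduct.tmul_mul_tmul, one_mul, mul_one,
        ← op_mul, ← op_one (α := A)]
      abel
    show tauEq.symm (f (eOm (x * y))) = _
    rw [key, map_add, f.map_smul, f.map_smul, smul_eq_mul, smul_eq_mul, map_add,
      tauEq_symm_right, tauEq_symm_left]
    rfl

lemma tau_derOf (f : ↥(Omega1 A) →ₗ[A ⊗[ℂ] Aᵐᵒᵖ] (A ⊗[ℂ] Aᵐᵒᵖ)) (a : A) :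
    tauEq (((derOf f : ↥(OutDer A)) : A →ₗ[ℂ] A ⊗[ℂ] A) a) = f (eOm a) := by
  show tauEq (tauEq.symm (f (eOm a))) = f (eOm a)
  rw [LinearEquiv.apply_symm_apply]

lemma tau_delta (x : A) :
    tauEq (((deltaDer (A := A) : ↥(OutDer A)) : A →ₗ[ℂ] A ⊗[ℂ] A) x) = eMap x := by
  show tauEq (x ⊗ₜ[ℂ] (1:A) - (1:A) ⊗ₜ[ℂ] x) = _
  rw [map_sub, tauEq_tmul, tauEq_tmul, eMap_apply]

end AuxProof


noncomputable section PhiOf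

variable {A : Type u} [Ring A] [Algebra ℂ A]
variable {V : Type u} [AddCommGroup V] [Module ℂ V] (ρ : A →ₐ[ℂ] Module.End ℂ V)

/-- The bimodule map `δ ↦ act (τ (δ a)) v`. -/
def phiOf (a : A) (v : Module.End ℂ V) : ↥(OutDer A) →ₗ[ℂ] Module.End ℂ V where
  toFun δ := act ρ (tauEq ((δ : A →ₗ[ℂ] A ⊗[ℂ] A) a)) v
  map_add' δ₁ δ₂ := by
    simp [map_add]
  map_smul' c δ := by
    simp [map_smul]

lemma phiOf_good (a : A) (v : Module.End ℂ V) (a' b : A) (δ : ↥(OutDer A)) :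
    phiOf ρ a v (innerLR a' δ b) = ρ a' * phiOf ρ a v δ * ρ b := by
  show act ρ (tauEq (((innerLR a' δ b : ↥(OutDer A)) : A →ₗ[ℂ] A ⊗[ℂ] A) a)) v = _
  have hc : ((innerLR a' δ b : ↥(OutDer A)) : A →ₗ[ℂ] A ⊗[ℂ] A) a
      = ((1:A) ⊗ₜ[ℂ] a') * ((δ : A →ₗ[ℂ] A ⊗[ℂ] A) a) * (b ⊗ₜ[ℂ] (1:A)) := by
    show ((1:A) ⊗ₜ[ℂ] a') * (((δ : A →ₗ[ℂ] A ⊗[ℂ] A) a) * (b ⊗ₜ[ℂ] (1:A))) = _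
    rw [mul_assoc]
  rw [hc, tauEq_inner, act_mul, act_tmul, MulOpposite.unop_op]
  rfl

lemma phiOf_delta (a : A) (v : Module.End ℂ V) :
    phiOf ρ a v (deltaDer (A := A)) = v * ρ a - ρ a * v := by
  show act ρ (tauEq (((deltaDer (A := A) : ↥(OutDer A)) : A →ₗ[ℂ] A ⊗[ℂ] A) a)) v = _
  rw [tau_delta, eMap_apply, map_sub, LinearMap.sub_apply, act_tmul, act_tmul,
    MulOpposite.unop_op]
  simp

end PhiOf

/-- Let `A` be a smooth ℂ-algebra, `V` a ℂ-vector space,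
`ρ : A → End_ℂ(V)` an algebra homomorphism and `λ ∈ A`.  There exists a ℂ-linear map
`φ : Der(A, A⊗A) → End_ℂ(V)` which is a homomorphism of `A`-bimodules for the inner
bimodule structure (`φ(a·δ·b) = ρ(a)∘φ(δ)∘ρ(b)`) and satisfies `φ(Δ_A) = ρ(λ)`, if and
only if `ρ(λ)` lies in the commutator space `[ρ(A), End(V)]`. -/
theorem stmt0 (A : Type u) [Ring A] [Algebra ℂ A] (hA : IsSmoothAlgebra A)
    (V : Type u) [AddCommGroup V] [Module ℂ V]
    (ρ : A →ₐ[ℂ] Module.End ℂ V) (lam : A) :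
    (∃ φ : ↥(OutDer A) →ₗ[ℂ] Module.End ℂ V,
        (∀ (a b : A) (δ : ↥(OutDer A)), φ (innerLR a δ b) = ρ a * φ δ * ρ b) ∧
        φ (deltaDer (A := A)) = ρ lam) ↔
      ρ lam ∈ Submodule.span ℂ
        {f : Module.End ℂ V | ∃ (a : A) (g : Module.End ℂ V), f = ρ a * g - g * ρ a} := by
  classical
  constructor
  · rintro ⟨φ, hφ, hφΔ⟩
    haveI := hA.2.1
    haveI := hA.2.2
    obtain ⟨n, π, s, hsurj, hinj, hcomp⟩ :=
      Module.Finite.exists_comp_eq_id_of_projective (A ⊗[ℂ] Aᵐᵒᵖ) ↥(Omega1 A)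
    set ϖ : Fin n → ↥(Omega1 A) := fun i => π (Pi.single i 1) with hϖ
    set F : Fin n → (↥(Omega1 A) →ₗ[A ⊗[ℂ] Aᵐᵒᵖ] (A ⊗[ℂ] Aᵐᵒᵖ)) :=
      fun i => (LinearMap.proj i) ∘ₗ s with hF
    have dual : ∀ ω : ↥(Omega1 A),
        (ω : A ⊗[ℂ] Aᵐᵒᵖ) = ∑ i, F i ω * ((ϖ i : A ⊗[ℂ] Aᵐᵒᵖ)) := by
      intro ω
      have h1 : π (s ω) = ω := by rw [← LinearMap.comp_apply, hcomp, LinearMap.id_apply]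
      have hsingle : ∀ (i : Fin n) (c : A ⊗[ℂ] Aᵐᵒᵖ),
          (Pi.single i c : Fin n → A ⊗[ℂ] Aᵐᵒᵖ) =
            c • (Pi.single i 1 : Fin n → A ⊗[ℂ] Aᵐᵒᵖ) := by
        intro i c; funext j
        by_cases hji : j = i
        · subst hji; simp
        · simp [Pi.single_eq_of_ne hji]
      have h2 : s ω = ∑ i, (s ω i) •
          (Pi.single (M := fun _ => A ⊗[ℂ] Aᵐᵒᵖ) i (1 : A ⊗[ℂ] Aᵐᵒᵖ)) := by
        conv_lhs => rw [← Finset.univ_sum_single (s ω)]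
        exact Finset.sum_congr rfl fun i _ => hsingle i (s ω i)
      calc (ω : A ⊗[ℂ] Aᵐᵒᵖ) = ((π (s ω) : ↥(Omega1 A)) : A ⊗[ℂ] Aᵐᵒᵖ) := by rw [h1]
        _ = ∑ i, F i ω * ((ϖ i : A ⊗[ℂ] Aᵐᵒᵖ)) := by
            rw [h2, map_sum, Submodule.coe_sum]
            refine Finset.sum_congr rfl fun i _ => ?_
            rw [map_smul, Submodule.coe_smul, smul_eq_mul]
            rfl
    have hdelta : (deltaDer (A := A)) =
        ∑ i, Jb ((ϖ i : A ⊗[ℂ] Aᵐᵒᵖ)) (derOf (F i)) := by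
      apply Subtype.ext; apply LinearMap.ext; intro x
      apply tauEq.injective
      rw [tau_delta]
      have hc : tauEq ((((∑ i, Jb ((ϖ i : A ⊗[ℂ] Aᵐᵒᵖ)) (derOf (F i))) :
            ↥(OutDer A)) : A →ₗ[ℂ] A ⊗[ℂ] A) x)
          = ∑ i, F i (eOm x) * ((ϖ i : A ⊗[ℂ] Aᵐᵒᵖ)) := by
        rw [Submodule.coe_sum, LinearMap.sum_apply, map_sum]
        refine Finset.sum_congr rfl fun i _ => ?_
        rw [Jb_coe_apply, LinearEquiv.apply_symm_apply, tau_derOf]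
      rw [hc, ← dual (eOm x), eOm_coe]
    rw [← hφΔ, hdelta]
    have hval : φ (∑ i, Jb ((ϖ i : A ⊗[ℂ] Aᵐᵒᵖ)) (derOf (F i)))
        = ∑ i, φ (Jb ((ϖ i : A ⊗[ℂ] Aᵐᵒᵖ)) (derOf (F i))) :=
      map_sum φ _ Finset.univ
    rw [hval]
    refine Submodule.sum_mem _ fun i _ => ?_
    rw [phi_Jb ρ φ hφ]
    exact act_omega_mem ρ (ϖ i) _
  · intro h
    have H : ∀ t ∈ Submodule.span ℂ
        {f : Module.End ℂ V | ∃ (a : A) (g : Module.End ℂ V), f = ρ a * g - g * ρ a},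
        ∃ φ : ↥(OutDer A) →ₗ[ℂ] Module.End ℂ V,
          (∀ (a b : A) (δ : ↥(OutDer A)), φ (innerLR a δ b) = ρ a * φ δ * ρ b) ∧
          φ (deltaDer (A := A)) = t := by
      intro t ht
      induction ht using Submodule.span_induction with
      | mem x hx =>
        obtain ⟨a, g, rfl⟩ := hx
        refine ⟨phiOf ρ a (-g), phiOf_good ρ a (-g), ?_⟩
        rw [phiOf_delta]
        simp only [neg_mul, mul_neg, sub_neg_eq_add]
        abel
      | zero =>
        exact ⟨0, fun a b δ => by simp, by simp⟩
      | add x y hx hy ihx ihy =>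
        obtain ⟨φ₁, h₁, e₁⟩ := ihx
        obtain ⟨φ₂, h₂, e₂⟩ := ihy
        refine ⟨φ₁ + φ₂, fun a b δ => ?_, ?_⟩
        · simp only [LinearMap.add_apply, h₁, h₂, mul_add, add_mul]
        · simp only [LinearMap.add_apply, e₁, e₂]
      | smul c x hx ihx =>
        obtain ⟨φ₁, h₁, e₁⟩ := ihx
        refine ⟨c • φ₁, fun a b δ => ?_, ?_⟩
        · simp only [LinearMap.smul_apply, h₁, mul_smul_comm, smul_mul_assoc]
        · simp only [LinearMap.smul_apply, e₁]
    exact H _ h
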